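/- arXiv:1308.6670 — 8 statements merged into one kernel-verified Lean document; each statement's English description precedes it below -/
import Mathlib

section
/- An arithmetical function f : ℕ → ℂ not identically zero is semimultiplicative if and only if there exists a positive integer a such that f(a) ≠ 0, f(n) = 0 whenever a does not divide n, and f(a)·f(a·m·n) = f(a·m)·f(a·n) whenever gcd(m,n) = 1. -/
/-- `f` is multiplicative: `f 1 = 1` and `f (m*n) = f m * f n` for coprime positive `m, n`. -/
def IsMult (f : ℕ → ℂ) : Prop :=
  f 1 = 1 ∧ ∀ m n : ℕ, 0 < m → 0 < n → Nat.Coprime m n → f (m * n) = f m * f n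

/-- `f` is semimultiplicative: `f n = c * g (n / a)` for a nonzero constant `c`,
a positive integer `a` and a multiplicative `g`, the value being `0` when `a ∤ n`. -/
def IsSemiMult (f : ℕ → ℂ) : Prop :=
  ∃ (c : ℂ) (a : ℕ) (g : ℕ → ℂ), c ≠ 0 ∧ 0 < a ∧ IsMult g ∧
    ∀ n : ℕ, 0 < n → f n = c * (if a ∣ n then g (n / a) else 0)

theorem semimult_iff (f : ℕ → ℂ) (hf : ∃ n : ℕ, 0 < n ∧ f n ≠ 0) :
    IsSemiMult f ↔ ∃ a : ℕ, 0 < a ∧ f a ≠ 0 ∧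
      (∀ n : ℕ, 0 < n → ¬ a ∣ n → f n = 0) ∧
      (∀ m n : ℕ, 0 < m → 0 < n → Nat.Coprime m n →
        f a * f (a * m * n) = f (a * m) * f (a * n)) := by
  constructor
  · rintro ⟨c, a, g, hc, ha, ⟨hg1, hgmul⟩, hfc⟩
    have key : ∀ k : ℕ, 0 < k → f (a * k) = c * g k := by
      intro k hk
      have h := hfc (a * k) (Nat.mul_pos ha hk)
      rw [if_pos (Dvd.intro k rfl)] at h
      rw [h, Nat.mul_div_cancel_left _ ha]
    have hfa : f a = c := by
      have := key 1 one_pos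
      simpa [hg1] using this
    refine ⟨a, ha, by rw [hfa]; exact hc, ?_, ?_⟩
    · intro n hn hnd
      rw [hfc n hn, if_neg hnd, mul_zero]
    · intro m n hm hn hco
      have h1 : f (a * m * n) = c * g (m * n) := by
        rw [mul_assoc]; exact key (m * n) (Nat.mul_pos hm hn)
      rw [hfa, h1, key m hm, key n hn, hgmul m n hm hn hco]
      ring
  · rintro ⟨a, ha, hfa, hzero, hmul⟩
    refine ⟨f a, a, fun k => f (a * k) / f a, hfa, ha, ⟨?_, ?_⟩, ?_⟩
    · simp [hfa]
    · intro m n hm hn hco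
      have h := hmul m n hm hn hco
      field_simp
      rw [← mul_assoc a m n]
      linear_combination h
    · intro n hn
      by_cases hd : a ∣ n
      · rw [if_pos hd]
        obtain ⟨k, rfl⟩ := hd
        rw [Nat.mul_div_cancel_left _ ha]
        field_simp
      · rw [if_neg hd, mul_zero]
        exact hzero n hn hd
end

section
/- The Dirichlet convolution of two semimultiplicative arithmetical functions is semimultiplicative. -/
/-- Dirichlet convolution. -/
noncomputable def dirichlet (f h : ℕ → ℂ) : ℕ → ℂ :=
  fun n => ∑ d ∈ n.divisors, f d * h (n / d)

private def toAF (g : ℕ → ℂ) : ArithmeticFunction ℂ :=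
  ⟨fun n => if n = 0 then 0 else g n, by simp⟩

private lemma toAF_mult {g : ℕ → ℂ} (hg : IsMult g) : (toAF g).IsMultiplicative := by
  constructor
  · show (if (1:ℕ) = 0 then 0 else g 1) = 1
    simpa using hg.1
  · intro m n hmn
    show (if m * n = 0 then 0 else g (m*n)) = (if m = 0 then 0 else g m) * (if n = 0 then 0 else g n)
    rcases Nat.eq_zero_or_pos m with hm | hm
    · subst hm
      have : n = 1 := by simpa [Nat.Coprime] using hmn
      simp [this]
    rcases Nat.eq_zero_or_pos n with hn | hn
    · subst hn
      have : m = 1 := by simpa [Nat.Coprime] using hmn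
      simp [this]
    rw [if_neg (by positivity), if_neg hm.ne', if_neg hn.ne']
    exact hg.2 m n hm hn hmn

private lemma dirichlet_eq_AF (g k : ℕ → ℂ) (n : ℕ) :
    dirichlet g k n = (toAF g * toAF k) n := by
  rw [ArithmeticFunction.mul_apply, dirichlet,
    ← Nat.sum_divisorsAntidiagonal (fun x y => g x * k y)]
  refine Finset.sum_congr rfl fun p hp => ?_
  obtain ⟨hpn, hn⟩ := Nat.mem_divisorsAntidiagonal.mp hp
  have h1 : p.1 ≠ 0 := by intro hz; rw [hz, zero_mul] at hpn; exact hn hpn.symm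
  have h2 : p.2 ≠ 0 := by intro hz; rw [hz, mul_zero] at hpn; exact hn hpn.symm
  show g p.1 * k p.2 = (if p.1 = 0 then 0 else g p.1) * (if p.2 = 0 then 0 else k p.2)
  rw [if_neg h1, if_neg h2]

private lemma mult_dirichlet {g k : ℕ → ℂ} (hg : IsMult g) (hk : IsMult k) :
    IsMult (dirichlet g k) := by
  have hm := (toAF_mult hg).mul (toAF_mult hk)
  constructor
  · rw [dirichlet_eq_AF]; exact hm.1
  · intro m n hm' hn' hco
    rw [dirichlet_eq_AF, dirichlet_eq_AF, dirichlet_eq_AF]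
    exact hm.2 hco

theorem semimult_dirichlet (f h : ℕ → ℂ) (hf : IsSemiMult f) (hh : IsSemiMult h) :
    IsSemiMult (dirichlet f h) := by
  obtain ⟨c, a, g, hc, ha, hg, hfe⟩ := hf
  obtain ⟨d, b, k, hd, hb, hk, hhe⟩ := hh
  refine ⟨c * d, a * b, dirichlet g k, mul_ne_zero hc hd, Nat.mul_pos ha hb,
    mult_dirichlet hg hk, fun n hn => ?_⟩
  have key : dirichlet f h n =
      ∑ p ∈ n.divisorsAntidiagonal,
        (c * (if a ∣ p.1 then g (p.1 / a) else 0)) * (d * (if b ∣ p.2 then k (p.2 / b) else 0)) := by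
    rw [dirichlet, Nat.sum_divisorsAntidiagonal
      (fun x y => (c * (if a ∣ x then g (x / a) else 0)) * (d * (if b ∣ y then k (y / b) else 0)))]
    refine Finset.sum_congr rfl fun e he => ?_
    obtain ⟨he1, he2⟩ := Nat.mem_divisors.mp he
    have hep : 0 < e := Nat.pos_of_mem_divisors he
    have hnp : 0 < n / e := Nat.div_pos (Nat.le_of_dvd hn he1) hep
    rw [hfe e hep, hhe (n / e) hnp]
  rw [key]
  by_cases hab : a * b ∣ n
  · rw [if_pos hab]
    classical
    have habn : a * b * (n / (a * b)) = n := Nat.mul_div_cancel' hab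
    rw [dirichlet, ← Nat.sum_divisorsAntidiagonal (fun x y => g x * k y), Finset.mul_sum]
    rw [← Finset.sum_filter_of_ne (p := fun p : ℕ × ℕ => a ∣ p.1 ∧ b ∣ p.2)
      (fun p _ hne => ?_)]
    · refine Finset.sum_nbij' (i := fun p : ℕ × ℕ => (p.1 / a, p.2 / b))
        (j := fun q : ℕ × ℕ => (a * q.1, b * q.2)) ?_ ?_ ?_ ?_ ?_
      · rintro ⟨x, y⟩ hp
        simp only [Finset.mem_filter, Nat.mem_divisorsAntidiagonal] at hp ⊢
        obtain ⟨⟨hxy, hn0⟩, hax, hby⟩ := hp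
        refine ⟨?_, ?_⟩
        · obtain ⟨u, rfl⟩ := hax
          obtain ⟨v, rfl⟩ := hby
          rw [Nat.mul_div_cancel_left u ha, Nat.mul_div_cancel_left v hb]
          exact (Nat.div_eq_of_eq_mul_left (Nat.mul_pos ha hb) (by rw [← hxy]; ring)).symm
        · intro hz
          rw [hz, mul_zero] at habn
          exact hn0 habn.symm
      · rintro ⟨u, v⟩ hq
        simp only [Nat.mem_divisorsAntidiagonal] at hq
        obtain ⟨huv, hN0⟩ := hq
        simp only [Finset.mem_filter, Nat.mem_divisorsAntidiagonal]
        exact ⟨⟨by rw [show a * u * (b * v) = a * b * (u * v) by ring, huv, habn],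
          fun h0 => by simp [h0] at hn⟩, ⟨u, rfl⟩, ⟨v, rfl⟩⟩
      · rintro ⟨x, y⟩ hp
        simp only [Finset.mem_filter, Nat.mem_divisorsAntidiagonal] at hp
        obtain ⟨_, hax, hby⟩ := hp
        simp [Nat.mul_div_cancel' hax, Nat.mul_div_cancel' hby]
      · rintro ⟨u, v⟩ _
        simp [Nat.mul_div_cancel_left u ha, Nat.mul_div_cancel_left v hb]
      · rintro ⟨x, y⟩ hp
        simp only [Finset.mem_filter, Nat.mem_divisorsAntidiagonal] at hp
        obtain ⟨_, hax, hby⟩ := hp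
        rw [if_pos hax, if_pos hby]; ring
    · by_cases h1 : a ∣ p.1
      · by_cases h2 : b ∣ p.2
        · exact ⟨h1, h2⟩
        · simp [h2] at hne
      · simp [h1] at hne
  · rw [if_neg hab, mul_zero]
    refine Finset.sum_eq_zero fun p hp => ?_
    obtain ⟨hpn, _⟩ := Nat.mem_divisorsAntidiagonal.mp hp
    by_cases h1 : a ∣ p.1
    · by_cases h2 : b ∣ p.2
      · exact absurd (hpn ▸ mul_dvd_mul h1 h2) hab
      · simp [h2]
    · simp [h1]
end

section
/- An arithmetical function f : ℕ^u → ℂ of u variables, not identically zero, is semimultiplicative if and only if there exist positive integers a₁,…,a_u such that f(a₁,…,a_u) ≠ 0, f(n₁,…,n_u) = 0 whenever a_i ∤ n_i for some i, and f(a₁,…,a_u)·f(a₁m₁n₁,…,a_u m_u n_u) = f(a₁m₁,…,a_u m_u)·f(a₁n₁,…,a_u n_u) whenever gcd(n₁⋯n_u, m₁⋯m_u) = 1. -/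
open scoped Classical

/-- A function of `u` variables is multiplicative if `g (1,…,1) = 1` and
`g (n₁m₁,…,n_um_u) = g n * g m` whenever `gcd (∏ nᵢ) (∏ mᵢ) = 1`. -/
def IsMultU {u : ℕ} (g : (Fin u → ℕ) → ℂ) : Prop :=
  g (fun _ => 1) = 1 ∧ ∀ n m : Fin u → ℕ, (∀ i, 0 < n i) → (∀ i, 0 < m i) →
    Nat.Coprime (∏ i, n i) (∏ i, m i) →
      g (fun i => n i * m i) = g n * g m

/-- A function of `u` variables is semimultiplicative if
`f n = c * g (n₁/a₁, …, n_u/a_u)` for a nonzero constant `c`, positive integers `aᵢ`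
and a multiplicative `g`, the value being `0` when some `aᵢ ∤ nᵢ`. -/
def IsSemiMultU {u : ℕ} (f : (Fin u → ℕ) → ℂ) : Prop :=
  ∃ (c : ℂ) (a : Fin u → ℕ) (g : (Fin u → ℕ) → ℂ), c ≠ 0 ∧ (∀ i, 0 < a i) ∧ IsMultU g ∧
    ∀ n : Fin u → ℕ, (∀ i, 0 < n i) →
      f n = c * (if ∀ i, a i ∣ n i then g (fun i => n i / a i) else 0)

theorem semimultU_iff {u : ℕ} (f : (Fin u → ℕ) → ℂ)
    (hf : ∃ n : Fin u → ℕ, (∀ i, 0 < n i) ∧ f n ≠ 0) :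
    IsSemiMultU f ↔ ∃ a : Fin u → ℕ, (∀ i, 0 < a i) ∧ f a ≠ 0 ∧
      (∀ n : Fin u → ℕ, (∀ i, 0 < n i) → (∃ i, ¬ a i ∣ n i) → f n = 0) ∧
      (∀ m n : Fin u → ℕ, (∀ i, 0 < m i) → (∀ i, 0 < n i) →
        Nat.Coprime (∏ i, n i) (∏ i, m i) →
          f a * f (fun i => a i * m i * n i) =
            f (fun i => a i * m i) * f (fun i => a i * n i)) := by
  clear hf
  constructor
  · rintro ⟨c, a, g, hc, ha, ⟨hg1, hgmul⟩, hfeq⟩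
    have hfa : f a = c := by
      rw [hfeq a ha, if_pos (fun i => dvd_rfl)]
      have : (fun i => a i / a i) = (fun _ : Fin u => 1) := by
        funext i; exact Nat.div_self (ha i)
      rw [this, hg1, mul_one]
    refine ⟨a, ha, by rw [hfa]; exact hc, ?_, ?_⟩
    · intro n hn hdvd
      rw [hfeq n hn, if_neg (by push_neg; exact ⟨hdvd.choose, hdvd.choose_spec⟩), mul_zero]
    · intro m n hm hn hcop
      have key : ∀ k : Fin u → ℕ, (∀ i, 0 < k i) → f (fun i => a i * k i) = c * g k := by
        intro k hk
        rw [hfeq _ (fun i => Nat.mul_pos (ha i) (hk i)),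
          if_pos (fun i => dvd_mul_right (a i) (k i))]
        have h2 : (fun i => a i * k i / a i) = k :=
          funext fun i => Nat.mul_div_cancel_left _ (ha i)
        rw [h2]
      have h1 : (fun i => a i * m i * n i) = (fun i => a i * (m i * n i)) := by
        funext i; ring
      rw [hfa, h1, key _ (fun i => Nat.mul_pos (hm i) (hn i)), key m hm, key n hn,
        hgmul m n hm hn hcop.symm]
      ring
  · rintro ⟨a, ha, hfa, hzero, hmul⟩
    refine ⟨f a, a, fun n => f (fun i => a i * n i) / f a, hfa, ha, ⟨?_, ?_⟩, ?_⟩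
    · show (f fun i => a i * 1) / f a = 1
      have : (fun i => a i * 1) = a := by funext i; exact mul_one _
      rw [this, div_self hfa]
    · intro n m hn hm hcop
      have h1 : (fun i => a i * (n i * m i)) = (fun i => a i * m i * n i) := by
        funext i; ring
      show (f fun i => a i * (n i * m i)) / f a =
        ((f fun i => a i * n i) / f a) * ((f fun i => a i * m i) / f a)
      rw [h1]
      have := hmul m n hm hn hcop
      field_simp
      linear_combination this
    · intro n hn
      by_cases hdvd : ∀ i, a i ∣ n i
      · rw [if_pos hdvd]
        show f n = f a * ((f fun i => a i * (n i / a i)) / f a)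
        have : (fun i => a i * (n i / a i)) = n := by
          funext i; exact Nat.mul_div_cancel' (hdvd i)
        rw [this, mul_div_cancel₀ _ hfa]
      · rw [if_neg hdvd, mul_zero]
        push_neg at hdvd
        exact hzero n hn hdvd
end

section
/- Every semimultiplicative function f : ℕ^u → ℂ of u variables is Selberg multiplicative: with a₁,…,a_u as in the definition and f(a₁,…,a_u) ≠ 0, f(n₁,…,n_u) = f(a₁,…,a_u)·∏_p ( f(a₁p^{ν_p(n₁)−ν_p(a₁)},…,a_u p^{ν_p(n_u)−ν_p(a_u)}) / f(a₁,…,a_u) ), where a factor is 0 if some exponent is negative. -/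
open scoped Classical

/-- A function of `u` variables is Selberg multiplicative:
`f n = ∏_p F_p (ν_p n₁, …, ν_p n_u)` where `F_p (0,…,0) = 1` for all but
finitely many primes `p`. -/
def IsSelbergMultU {u : ℕ} (f : (Fin u → ℕ) → ℂ) : Prop :=
  ∃ F : ℕ → (Fin u → ℕ) → ℂ, {p : ℕ | p.Prime ∧ F p (fun _ => 0) ≠ 1}.Finite ∧
    ∀ n : Fin u → ℕ, (∀ i, 0 < n i) →
      f n = ∏ᶠ (p : ℕ) (_ : p.Prime), F p (fun i => (n i).factorization p)

lemma finprod_primes_eq {M : Type*} [CommMonoid M] (h : ℕ → M) (S : Finset ℕ)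
    (hS : ∀ p ∈ S, p.Prime) (hsupp : ∀ p, p.Prime → h p ≠ 1 → p ∈ S) :
    (∏ᶠ (p : ℕ) (_ : p.Prime), h p) = ∏ p ∈ S, h p :=
  finprod_cond_eq_prod_of_cond_iff h (fun {x} hx => ⟨fun hp => hsupp x hp hx, hS x⟩)

lemma fac_zero_of_not_mem {n q : ℕ} (h : q ∉ n.primeFactors) :
    n.factorization q = 0 := by
  rw [← Nat.support_factorization] at h
  exact Finsupp.notMem_support_iff.1 h

lemma multU_prod_factorization {u : ℕ} {g : (Fin u → ℕ) → ℂ} (hg : IsMultU g)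
    (S : Finset ℕ) :
    (∀ p ∈ S, p.Prime) → ∀ m : Fin u → ℕ, (∀ i, 0 < m i) → (∀ i, (m i).primeFactors ⊆ S) →
      g m = ∏ p ∈ S, g (fun i => p ^ (m i).factorization p) := by
  induction S using Finset.induction_on with
  | empty =>
    intro _ m hm hcov
    have hm1 : ∀ i, m i = 1 := by
      intro i
      rcases Nat.primeFactors_eq_empty.1 (Finset.subset_empty.1 (hcov i)) with h | h
      · exact absurd h (hm i).ne'
      · exact h
    have : m = fun _ => 1 := funext hm1
    rw [this, hg.1, Finset.prod_empty]
  | @insert p T hp IH =>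
    intro hprime m hm hcov
    have pp : p.Prime := hprime p (Finset.mem_insert_self p T)
    set e : Fin u → ℕ := fun i => (m i).factorization p with he
    set m' : Fin u → ℕ := fun i => m i / p ^ e i with hm'def
    have hm' : ∀ i, 0 < m' i := fun i => Nat.ordCompl_pos p (hm i).ne'
    have hsplit : ∀ i, m i = p ^ e i * m' i := fun i =>
      (Nat.ordProj_mul_ordCompl_eq_self (m i) p).symm
    have hnd : ∀ i, ¬ p ∣ m' i := fun i => Nat.not_dvd_ordCompl pp (hm i).ne'
    have hcop : Nat.Coprime (∏ i, p ^ e i) (∏ i, m' i) := by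
      rw [Finset.prod_pow_eq_pow_sum]
      apply Nat.Coprime.pow_left
      rw [Nat.Prime.coprime_iff_not_dvd pp]
      intro hdvd
      obtain ⟨j, _, hj⟩ := (Prime.dvd_finset_prod_iff pp.prime m').1 hdvd
      exact hnd j hj
    have hgm : g m = g (fun i => p ^ e i) * g m' := by
      have : m = fun i => (p ^ e i) * m' i := funext hsplit
      rw [this]
      exact hg.2 _ _ (fun i => pow_pos pp.pos _) hm' hcop
    have hfac : ∀ q, q ≠ p → ∀ i, (m' i).factorization q = (m i).factorization q := by
      intro q hq i
      show ((m i / p ^ (m i).factorization p).factorization) q = _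
      rw [Nat.factorization_ordCompl, Finsupp.erase_ne hq]
    have hcov' : ∀ i, (m' i).primeFactors ⊆ T := by
      intro i q hq
      have h1 : q ∈ (m i).primeFactors :=
        Nat.primeFactors_mono (Nat.ordCompl_dvd (m i) p) (hm i).ne' hq
      have hqp : q ≠ p := by
        rintro rfl
        exact hnd i (Nat.dvd_of_mem_primeFactors hq)
      rcases Finset.mem_insert.1 (hcov i h1) with h | h
      · exact absurd h hqp
      · exact h
    rw [Finset.prod_insert hp, hgm,
      IH (fun q hq => hprime q (Finset.mem_insert_of_mem hq)) m' hm' hcov']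
    congr 1
    apply Finset.prod_congr rfl
    intro q hq
    congr 1
    funext i
    rw [hfac q (fun h => hp (h ▸ hq)) i]


lemma bprod {u : ℕ} {g : (Fin u → ℕ) → ℂ} (hg : IsMultU g)
    (a n : Fin u → ℕ) (ha : ∀ i, 0 < a i) (hn : ∀ i, 0 < n i)
    (S : Finset ℕ) (hS : ∀ p ∈ S, p.Prime)
    (hcovn : ∀ i, (n i).primeFactors ⊆ S) (hcova : ∀ i, (a i).primeFactors ⊆ S) :
    (∏ p ∈ S, if ∀ i, (a i).factorization p ≤ (n i).factorization p then
        g (fun i => p ^ ((n i).factorization p - (a i).factorization p)) else 0)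
      = if ∀ i, a i ∣ n i then g (fun i => n i / a i) else 0 := by
  by_cases h : ∀ i, a i ∣ n i
  · rw [if_pos h]
    have hle : ∀ i p, (a i).factorization p ≤ (n i).factorization p := fun i p =>
      Finsupp.le_def.1 ((Nat.factorization_le_iff_dvd (ha i).ne' (hn i).ne').2 (h i)) p
    have hm : ∀ i, 0 < n i / a i := fun i => Nat.div_pos (Nat.le_of_dvd (hn i) (h i)) (ha i)
    have hcov : ∀ i, (n i / a i).primeFactors ⊆ S := fun i =>
      (Nat.primeFactors_mono (Nat.div_dvd_of_dvd (h i)) (hn i).ne').trans (hcovn i)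
    rw [multU_prod_factorization hg S hS _ hm hcov]
    apply Finset.prod_congr rfl
    intro p _
    rw [if_pos (fun i => hle i p)]
    congr 1
    funext i
    rw [Nat.factorization_div (h i), Finsupp.tsub_apply]
  · rw [if_neg h]
    push_neg at h
    obtain ⟨j, hj⟩ := h
    have : ¬ (a j).factorization ≤ (n j).factorization := fun hle =>
      hj ((Nat.factorization_le_iff_dvd (ha j).ne' (hn j).ne').1 hle)
    rw [Finsupp.le_def] at this
    push_neg at this
    obtain ⟨p, hp⟩ := this
    have hpa : p ∈ (a j).primeFactors := by
      by_contra hmem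
      rw [fac_zero_of_not_mem hmem] at hp
      exact absurd (Nat.zero_le _) (not_le.2 hp)
    refine Finset.prod_eq_zero (hcova j hpa) ?_
    rw [if_neg]
    push_neg
    exact ⟨j, hp⟩

theorem semimultU_selberg {u : ℕ} (f : (Fin u → ℕ) → ℂ)
    (c : ℂ) (a : Fin u → ℕ) (g : (Fin u → ℕ) → ℂ)
    (hc : c ≠ 0) (ha : ∀ i, 0 < a i) (hg : IsMultU g)
    (hfg : ∀ n : Fin u → ℕ, (∀ i, 0 < n i) →
      f n = c * (if ∀ i, a i ∣ n i then g (fun i => n i / a i) else 0)) :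
    IsSelbergMultU f ∧ f a ≠ 0 ∧
      ∀ n : Fin u → ℕ, (∀ i, 0 < n i) →
        f n = f a * ∏ᶠ (p : ℕ) (_ : p.Prime),
          (if ∀ i, (a i).factorization p ≤ (n i).factorization p then
            f (fun i => a i * p ^ ((n i).factorization p - (a i).factorization p)) / f a
          else 0) := by
  have hfa : f a = c := by
    rw [hfg a ha, if_pos (fun i => dvd_refl (a i))]
    have h1 : (fun i => a i / a i) = (fun _ : Fin u => 1) :=
      funext fun i => Nat.div_self (ha i)
    rw [h1, hg.1, mul_one]
  have hfactor : ∀ (p : ℕ), p.Prime → ∀ d : Fin u → ℕ,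
      f (fun i => a i * p ^ d i) = c * g (fun i => p ^ d i) := by
    intro p pp d
    rw [hfg _ (fun i => Nat.mul_pos (ha i) (pow_pos pp.pos _)),
      if_pos (fun i => dvd_mul_right (a i) (p ^ d i))]
    congr 1
    congr 1
    funext i
    exact Nat.mul_div_cancel_left _ (ha i)
  refine ⟨?_, hfa ▸ hc, ?_⟩
  · -- IsSelbergMultU
    refine ⟨fun p k => (if p = 2 then c else 1) *
      (if ∀ i, (a i).factorization p ≤ k i then
        g (fun i => p ^ (k i - (a i).factorization p)) else 0), ?_, ?_⟩
    · apply Set.Finite.subset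
        (Finset.finite_toSet (insert 2 (Finset.univ.biUnion fun i : Fin u => (a i).primeFactors)))
      rintro p ⟨pp, hne⟩
      by_contra hmem
      apply hne
      simp only [Finset.coe_insert, Set.mem_insert_iff, Finset.mem_coe, Finset.mem_insert,
        Finset.mem_biUnion, Finset.mem_univ, true_and, not_or, not_exists] at hmem
      obtain ⟨hp2, hpa⟩ := hmem
      have ha0 : ∀ i, (a i).factorization p = 0 := fun i => fac_zero_of_not_mem (hpa i)
      show (if p = 2 then c else 1) *
        (if ∀ i : Fin u, (a i).factorization p ≤ 0 then
          g (fun i => p ^ (0 - (a i).factorization p)) else 0) = 1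
      rw [if_neg hp2, one_mul, if_pos (fun i => (ha0 i).le), ← hg.1]
      congr 1
      funext i
      rw [ha0 i, Nat.sub_zero, pow_zero]
    · intro n hn
      beta_reduce
      set Sn : Finset ℕ :=
        insert 2 (Finset.univ.biUnion fun i : Fin u => (n i).primeFactors ∪ (a i).primeFactors)
        with hSn
      have hSp : ∀ p ∈ Sn, p.Prime := by
        intro p hp
        rcases Finset.mem_insert.1 hp with h | h
        · exact h ▸ Nat.prime_two
        · obtain ⟨i, _, hi⟩ := Finset.mem_biUnion.1 h
          rcases Finset.mem_union.1 hi with h' | h' <;>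
            exact Nat.prime_of_mem_primeFactors h'
      have covn : ∀ i, (n i).primeFactors ⊆ Sn := fun i q hq =>
        Finset.mem_insert_of_mem
          (Finset.mem_biUnion.2 ⟨i, Finset.mem_univ i, Finset.mem_union_left _ hq⟩)
      have cova : ∀ i, (a i).primeFactors ⊆ Sn := fun i q hq =>
        Finset.mem_insert_of_mem
          (Finset.mem_biUnion.2 ⟨i, Finset.mem_univ i, Finset.mem_union_right _ hq⟩)
      have hsupp : ∀ p, p.Prime →
          ((if p = 2 then c else 1) *
            (if ∀ i, (a i).factorization p ≤ (n i).factorization p then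
              g (fun i => p ^ ((n i).factorization p - (a i).factorization p)) else 0)) ≠ 1 →
          p ∈ Sn := by
        intro p pp hne
        by_contra hmem
        apply hne
        have hp2 : p ≠ 2 := fun h => hmem (h ▸ Finset.mem_insert_self 2 _)
        have hn0 : ∀ i, (n i).factorization p = 0 := fun i =>
          fac_zero_of_not_mem (fun h => hmem (covn i h))
        have ha0 : ∀ i, (a i).factorization p = 0 := fun i =>
          fac_zero_of_not_mem (fun h => hmem (cova i h))
        rw [if_neg hp2, one_mul, if_pos (fun i => (ha0 i) ▸ Nat.zero_le _), ← hg.1]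
        congr 1
        funext i
        rw [ha0 i, hn0 i, Nat.sub_zero, pow_zero]
      rw [hfg n hn, finprod_primes_eq _ Sn hSp hsupp, Finset.prod_mul_distrib,
        Finset.prod_ite_eq' Sn 2 (fun _ => c), if_pos (Finset.mem_insert_self 2 _),
        bprod hg a n ha hn Sn hSp covn cova]
  · -- main formula
    intro n hn
    set Sn : Finset ℕ :=
      Finset.univ.biUnion (fun i : Fin u => (n i).primeFactors ∪ (a i).primeFactors)
      with hSn
    have hSp : ∀ p ∈ Sn, p.Prime := by
      intro p hp
      obtain ⟨i, _, hi⟩ := Finset.mem_biUnion.1 hp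
      rcases Finset.mem_union.1 hi with h' | h' <;>
        exact Nat.prime_of_mem_primeFactors h'
    have covn : ∀ i, (n i).primeFactors ⊆ Sn := fun i q hq =>
      Finset.mem_biUnion.2 ⟨i, Finset.mem_univ i, Finset.mem_union_left _ hq⟩
    have cova : ∀ i, (a i).primeFactors ⊆ Sn := fun i q hq =>
      Finset.mem_biUnion.2 ⟨i, Finset.mem_univ i, Finset.mem_union_right _ hq⟩
    have hsupp : ∀ p, p.Prime →
        (if ∀ i, (a i).factorization p ≤ (n i).factorization p then
          f (fun i => a i * p ^ ((n i).factorization p - (a i).factorization p)) / c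
          else 0) ≠ 1 → p ∈ Sn := by
      intro p pp hne
      by_contra hmem
      apply hne
      have hn0 : ∀ i, (n i).factorization p = 0 := fun i =>
        fac_zero_of_not_mem (fun h => hmem (covn i h))
      have ha0 : ∀ i, (a i).factorization p = 0 := fun i =>
        fac_zero_of_not_mem (fun h => hmem (cova i h))
      rw [if_pos (fun i => (ha0 i) ▸ Nat.zero_le _)]
      have : (fun i => a i * p ^ ((n i).factorization p - (a i).factorization p)) = a := by
        funext i
        rw [ha0 i, hn0 i, Nat.sub_zero, pow_zero, mul_one]
      rw [this, hfa, div_self hc]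
    rw [hfg n hn, hfa, finprod_primes_eq _ Sn hSp hsupp,
      ← bprod hg a n ha hn Sn hSp covn cova]
    congr 1
    apply Finset.prod_congr rfl
    intro p hp
    by_cases hcond : ∀ i, (a i).factorization p ≤ (n i).factorization p
    · rw [if_pos hcond, if_pos hcond, hfactor p (hSp p hp), mul_div_cancel_left₀ _ hc]
    · rw [if_neg hcond, if_neg hcond]
end

section
/- The function f : ℕ² → ℂ defined by f(n₁, n₂) = 0 if both n₁ and n₂ are odd, and f(n₁, n₂) = 1 otherwise, is Selberg multiplicative (as a function of two variables) but not semimultiplicative. -/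
open scoped Classical

/-- A function of two variables is multiplicative. -/
def IsMult2 (g : ℕ → ℕ → ℂ) : Prop :=
  g 1 1 = 1 ∧ ∀ n₁ n₂ m₁ m₂ : ℕ, 0 < n₁ → 0 < n₂ → 0 < m₁ → 0 < m₂ →
    Nat.Coprime (n₁ * n₂) (m₁ * m₂) →
      g (n₁ * m₁) (n₂ * m₂) = g n₁ n₂ * g m₁ m₂

/-- A function of two variables is semimultiplicative. -/
def IsSemiMult2 (f : ℕ → ℕ → ℂ) : Prop :=
  ∃ (c : ℂ) (a₁ a₂ : ℕ) (g : ℕ → ℕ → ℂ), c ≠ 0 ∧ 0 < a₁ ∧ 0 < a₂ ∧ IsMult2 g ∧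
    ∀ n₁ n₂ : ℕ, 0 < n₁ → 0 < n₂ →
      f n₁ n₂ = c * (if a₁ ∣ n₁ ∧ a₂ ∣ n₂ then g (n₁ / a₁) (n₂ / a₂) else 0)

/-- A function of two variables is Selberg multiplicative. -/
def IsSelbergMult2 (f : ℕ → ℕ → ℂ) : Prop :=
  ∃ F : ℕ → ℕ → ℕ → ℂ, {p : ℕ | p.Prime ∧ F p 0 0 ≠ 1}.Finite ∧
    ∀ n₁ n₂ : ℕ, 0 < n₁ → 0 < n₂ →
      f n₁ n₂ = ∏ᶠ (p : ℕ) (_ : p.Prime), F p (n₁.factorization p) (n₂.factorization p)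

theorem selberg_not_semimult_example :
    IsSelbergMult2 (fun n₁ n₂ => if Odd n₁ ∧ Odd n₂ then (0 : ℂ) else 1) ∧
    ¬ IsSemiMult2 (fun n₁ n₂ => if Odd n₁ ∧ Odd n₂ then (0 : ℂ) else 1) := by
  constructor
  · refine ⟨fun p a b => if p = 2 then (if a = 0 ∧ b = 0 then 0 else 1) else 1, ?_, ?_⟩
    · apply Set.Finite.subset (Set.finite_singleton 2)
      intro p hp
      by_contra h
      simp only [Set.mem_singleton_iff] at h
      simp [h] at hp
    · intro n₁ n₂ h₁ h₂
      have hsingle : ∀ p : ℕ, p ≠ 2 →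
          (∏ᶠ (_ : p.Prime), (if p = 2 then (if n₁.factorization p = 0 ∧
            n₂.factorization p = 0 then (0:ℂ) else 1) else 1)) = 1 := by
        intro p hp
        simp [hp]
      rw [finprod_eq_single _ 2 hsingle]
      have h2 : Nat.Prime 2 := Nat.prime_two
      rw [finprod_eq_if, if_pos h2, if_pos rfl]
      have hf : ∀ n : ℕ, 0 < n → (n.factorization 2 = 0 ↔ Odd n) := by
        intro n hn
        rw [Nat.factorization_eq_zero_iff, Nat.odd_iff]
        have : 2 ∣ n ↔ n % 2 = 0 := Nat.dvd_iff_mod_eq_zero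
        constructor
        · rintro (h | h | h)
          · exact absurd h2 h
          · omega
          · omega
        · intro h; refine Or.inr (Or.inl ?_); omega
      simp only [hf n₁ h₁, hf n₂ h₂]
  · rintro ⟨c, a₁, a₂, g, hc, ha₁, ha₂, ⟨hg1, _⟩, hf⟩
    have h12 := hf 1 2 one_pos two_pos
    have h21 := hf 2 1 two_pos one_pos
    have h11 := hf 1 1 one_pos one_pos
    simp only [(by decide : ¬ Odd 2)] at h12 h21
    norm_num at h12 h21 h11
    have ha1 : a₁ = 1 := by
      by_contra h
      simp [h] at h12
    have ha2 : a₂ = 1 := by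
      by_contra h
      simp [h] at h21
    simp [ha1, ha2, hg1] at h11
    exact hc h11
end

section
/- Let f(n, r) be an arithmetical function of two variables such that for each r ≥ 1 the function n ↦ f(n, r) is r-even (f(n, r) = f(gcd(n, r), r) for all n) and for each n ≥ 1 the function r ↦ f(n, r) is multiplicative. Then f is multiplicative as a function of two variables: f(mn, rs) = f(m, r)·f(n, s) whenever gcd(mr, ns) = 1. -/
theorem even_mult_implies_mult_two_vars (f : ℕ → ℕ → ℂ)
    (heven : ∀ r : ℕ, 0 < r → ∀ n : ℕ, 0 < n → f n r = f (Nat.gcd n r) r)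
    (hone : ∀ n : ℕ, 0 < n → f n 1 = 1)
    (hmult : ∀ n : ℕ, 0 < n → ∀ r s : ℕ, 0 < r → 0 < s → Nat.Coprime r s →
      f n (r * s) = f n r * f n s) :
    ∀ m n r s : ℕ, 0 < m → 0 < n → 0 < r → 0 < s →
      Nat.Coprime (m * r) (n * s) →
        f (m * n) (r * s) = f m r * f n s := by
  intro m n r s hm hn hr hs hcop
  have hrs : Nat.Coprime r s := Nat.Coprime.coprime_dvd_left (dvd_mul_left r m)
    (Nat.Coprime.coprime_dvd_right (dvd_mul_left s n) hcop)
  have hnr : Nat.Coprime n r := (Nat.Coprime.coprime_dvd_right (dvd_mul_right n s)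
    (Nat.Coprime.coprime_dvd_left (dvd_mul_left r m) hcop)).symm
  have hms : Nat.Coprime m s := Nat.Coprime.coprime_dvd_left (dvd_mul_right m r)
    (Nat.Coprime.coprime_dvd_right (dvd_mul_left s n) hcop)
  have hmn : 0 < m * n := Nat.mul_pos hm hn
  have h1 : f (m * n) r = f m r := by
    rw [heven r hr (m * n) hmn, Nat.Coprime.gcd_mul_right_cancel m hnr,
      ← heven r hr m hm]
  have h2 : f (m * n) s = f n s := by
    rw [heven s hs (m * n) hmn, Nat.Coprime.gcd_mul_left_cancel n hms,
      ← heven s hs n hn]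
  rw [hmult (m * n) hmn r s hr hs hrs, h1, h2]
end

section
/- For Ramanujan's sum and coprime positive integers m, n: c_r(m)·c_r(n) = μ(r)·c_r(mn), where μ is the Möbius function. -/
open ArithmeticFunction in
/-- Ramanujan's sum `c_r(n) = ∑_{d ∣ gcd(n,r)} d · μ(r/d)`. -/
noncomputable def ramanujan (r n : ℕ) : ℂ :=
  ∑ d ∈ (Nat.gcd n r).divisors, (d : ℂ) * (moebius (r / d) : ℤ)

open ArithmeticFunction in
lemma moebius_aux (d e c : ℕ) (h : Nat.Coprime d e) :
    moebius (e * c) * moebius (d * c) = moebius (d * (e * c)) * moebius c := by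
  by_cases hdc : Nat.Coprime d c
  · by_cases hec : Nat.Coprime e c
    · have h1 := isMultiplicative_moebius.map_mul_of_coprime hec
      have h2 := isMultiplicative_moebius.map_mul_of_coprime hdc
      have h3 := isMultiplicative_moebius.map_mul_of_coprime (Nat.Coprime.mul_right h hdc)
      rw [h1, h2, h3, h1]; ring
    · obtain ⟨p, hp, hpe, hpc⟩ := Nat.Prime.not_coprime_iff_dvd.mp hec
      have h1 : ¬ Squarefree (e * c) := fun hs =>
        hp.ne_one (Nat.isUnit_iff.mp (hs p (mul_dvd_mul hpe hpc)))
      have h2 : ¬ Squarefree (d * (e * c)) := fun hs =>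
        h1 (hs.squarefree_of_dvd (dvd_mul_left _ _))
      rw [moebius_eq_zero_of_not_squarefree h1, moebius_eq_zero_of_not_squarefree h2,
        zero_mul, zero_mul]
  · obtain ⟨p, hp, hpd, hpc⟩ := Nat.Prime.not_coprime_iff_dvd.mp hdc
    have h1 : ¬ Squarefree (d * c) := fun hs =>
      hp.ne_one (Nat.isUnit_iff.mp (hs p (mul_dvd_mul hpd hpc)))
    have h2 : ¬ Squarefree (d * (e * c)) := fun hs =>
      h1 (hs.squarefree_of_dvd (mul_dvd_mul_left d (dvd_mul_left c e)))
    rw [moebius_eq_zero_of_not_squarefree h1, moebius_eq_zero_of_not_squarefree h2,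
      mul_zero, zero_mul]

open ArithmeticFunction in
theorem ramanujan_quasimult (r m n : ℕ) (hr : 0 < r) (hm : 0 < m) (hn : 0 < n)
    (h : Nat.Coprime m n) :
    ramanujan r m * ramanujan r n = (moebius r : ℤ) * ramanujan r (m * n) := by
  set a := Nat.gcd m r with ha
  set b := Nat.gcd n r with hb
  have hab : Nat.Coprime a b :=
    Nat.Coprime.coprime_dvd_left (Nat.gcd_dvd_left m r)
      (Nat.Coprime.coprime_dvd_right (Nat.gcd_dvd_left n r) h)
  have hgcd : Nat.gcd (m * n) r = a * b := by
    rw [Nat.gcd_comm, Nat.Coprime.gcd_mul r h, Nat.gcd_comm r m, Nat.gcd_comm r n]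
  have ha0 : a ≠ 0 := Nat.gcd_ne_zero_left hm.ne'
  have hb0 : b ≠ 0 := Nat.gcd_ne_zero_left hn.ne'
  unfold ramanujan
  rw [hgcd, Finset.sum_mul_sum, Finset.mul_sum]
  rw [← Finset.sum_product']
  refine Finset.sum_nbij' (fun p => p.1 * p.2) (fun f => (Nat.gcd f a, Nat.gcd f b))
    ?_ ?_ ?_ ?_ ?_
  · rintro ⟨d, e⟩ hde
    simp only [Finset.mem_product, Nat.mem_divisors] at hde ⊢
    exact ⟨mul_dvd_mul hde.1.1 hde.2.1, mul_ne_zero ha0 hb0⟩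
  · intro f hf
    simp only [Nat.mem_divisors, Finset.mem_product] at hf ⊢
    exact ⟨⟨Nat.gcd_dvd_right f a, ha0⟩, ⟨Nat.gcd_dvd_right f b, hb0⟩⟩
  · rintro ⟨d, e⟩ hde
    simp only [Finset.mem_product, Nat.mem_divisors] at hde
    obtain ⟨⟨hda, _⟩, ⟨heb, _⟩⟩ := hde
    have hde' : Nat.Coprime d e :=
      Nat.Coprime.coprime_dvd_left hda (Nat.Coprime.coprime_dvd_right heb hab)
    have h1 : Nat.gcd (d * e) a = d := by
      rw [Nat.gcd_comm, Nat.Coprime.gcd_mul a hde', Nat.gcd_comm a d, Nat.gcd_eq_left hda,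
        Nat.Coprime.gcd_eq_one, mul_one]
      exact Nat.Coprime.coprime_dvd_right (show e ∣ b from heb) hab
    have h2 : Nat.gcd (d * e) b = e := by
      rw [Nat.gcd_comm, Nat.Coprime.gcd_mul b hde', Nat.gcd_comm b e, Nat.gcd_eq_left heb,
        Nat.Coprime.gcd_eq_one, one_mul]
      exact Nat.Coprime.coprime_dvd_right (show d ∣ a from hda) hab.symm
    simp [h1, h2]
  · intro f hf
    simp only [Nat.mem_divisors] at hf
    have : Nat.gcd f (a * b) = f := Nat.gcd_eq_left hf.1
    rw [Nat.Coprime.gcd_mul f hab] at this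
    simpa using this
  · rintro ⟨d, e⟩ hde
    simp only [Finset.mem_product, Nat.mem_divisors] at hde
    obtain ⟨⟨hda, _⟩, ⟨heb, _⟩⟩ := hde
    have hde' : Nat.Coprime d e :=
      Nat.Coprime.coprime_dvd_left hda (Nat.Coprime.coprime_dvd_right heb hab)
    have hdr : d ∣ r := hda.trans (Nat.gcd_dvd_right m r)
    have her : e ∣ r := heb.trans (Nat.gcd_dvd_right n r)
    have hder : d * e ∣ r := Nat.Coprime.mul_dvd_of_dvd_of_dvd hde' hdr her
    obtain ⟨c, hc⟩ := hder
    have hd0 : d ≠ 0 := fun h0 => hm.ne' (by simpa [h0] using hda.trans (Nat.gcd_dvd_left m r))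
    have he0 : e ≠ 0 := fun h0 => hn.ne' (by simpa [h0] using heb.trans (Nat.gcd_dvd_left n r))
    have hrd : r / d = e * c := by
      rw [hc]; rw [mul_assoc]; exact Nat.mul_div_cancel_left _ (Nat.pos_of_ne_zero hd0)
    have hre : r / e = d * c := by
      rw [hc, mul_comm d e, mul_assoc]
      exact Nat.mul_div_cancel_left _ (Nat.pos_of_ne_zero he0)
    have hrde : r / (d * e) = c := by
      rw [hc]
      exact Nat.mul_div_cancel_left _ (Nat.pos_of_ne_zero (mul_ne_zero hd0 he0))
    have key := moebius_aux d e c hde'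
    rw [← mul_assoc d e c, ← hc] at key
    simp only [hrd, hre, hrde] at *
    have : ((moebius (e * c) : ℤ) : ℂ) * ((moebius (d * c) : ℤ) : ℂ)
        = ((moebius r : ℤ) : ℂ) * ((moebius c : ℤ) : ℂ) := by
      rw [← Int.cast_mul, ← Int.cast_mul, key]
    push_cast
    push_cast at this
    calc (d : ℂ) * (moebius (e * c) : ℤ) * ((e : ℂ) * (moebius (d * c) : ℤ))
        = (d : ℂ) * (e : ℂ) * ((moebius (e * c) : ℤ) * ((moebius (d * c)) : ℤ)) := by push_cast; ring
      _ = (d : ℂ) * (e : ℂ) * ((moebius r : ℤ) * ((moebius c : ℤ) : ℂ)) := by rw [this]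
      _ = (moebius r : ℤ) * ((d : ℂ) * (e : ℂ) * (moebius c : ℤ)) := by push_cast; ring
end

section
/- Define c̄_r(n) = ∑_{d | gcd(n,r)} d·μ̄_r(r/d), where μ̄_r is the multiplicative function (in its argument) determined by μ̄_r ∗ 1 = g_r, with g_r the characteristic function of the unitary divisors of r. Then for coprime positive integers m, n: c̄_r(m)·c̄_r(n) = μ̄(r)·c̄_r(mn), where μ̄(r) = 1 if r = 1 or r is squareful (every prime dividing r divides it at least twice) and μ̄(r) = 0 otherwise. -/
/-- `g_r`: the characteristic function of the unitary divisors of `r`. -/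
noncomputable def unitaryChar (r n : ℕ) : ℂ :=
  if n ∣ r ∧ Nat.Coprime n (r / n) then 1 else 0

open ArithmeticFunction in
/-- `μ̄_r`, defined by Möbius inversion from `μ̄_r ∗ 1 = g_r`. -/
noncomputable def mubar (r n : ℕ) : ℂ :=
  ∑ d ∈ n.divisors, unitaryChar r d * (moebius (n / d) : ℤ)

/-- The analogue of Ramanujan's sum with respect to regular integers (mod `r`):
`c̄_r(n) = ∑_{d ∣ gcd(n,r)} d · μ̄_r(r/d)`. -/
noncomputable def ramanujanBar (r n : ℕ) : ℂ :=
  ∑ d ∈ (Nat.gcd n r).divisors, (d : ℂ) * mubar r (r / d)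

noncomputable def sfun (r g : ℕ) : ℂ :=
  ∑ d ∈ g.divisors, (d : ℂ) * mubar r (r / d)

noncomputable def mub (r : ℕ) : ℂ :=
  if ∀ p ∈ r.primeFactors, p ^ 2 ∣ r then 1 else 0

open Finset

lemma sum_divisors_coprime_mul (f : ℕ → ℂ) {a b : ℕ} (hab : Nat.Coprime a b) :
    ∑ d ∈ (a * b).divisors, f d = ∑ x ∈ a.divisors, ∑ y ∈ b.divisors, f (x * y) := by
  rw [← Finset.sum_product']
  refine Finset.sum_nbij' (fun d => (d.gcd a, d.gcd b)) (fun p => p.1 * p.2) ?_ ?_ ?_ ?_ ?_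
  · intro d hd
    rw [Nat.mem_divisors] at hd
    simp only [Finset.mem_product, Nat.mem_divisors]
    have hab0 : a ≠ 0 ∧ b ≠ 0 := by
      constructor <;> rintro rfl <;> simp_all
    exact ⟨⟨Nat.gcd_dvd_right _ _, hab0.1⟩, ⟨Nat.gcd_dvd_right _ _, hab0.2⟩⟩
  · rintro ⟨x, y⟩ hp
    simp only [Finset.mem_product, Nat.mem_divisors] at hp
    exact Nat.mem_divisors.2 ⟨mul_dvd_mul hp.1.1 hp.2.1, mul_ne_zero hp.1.2 hp.2.2⟩
  · intro d hd
    rw [Nat.mem_divisors] at hd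
    show d.gcd a * d.gcd b = d
    rw [← Nat.Coprime.gcd_mul d hab, Nat.gcd_eq_left hd.1]
  · rintro ⟨x, y⟩ hp
    simp only [Finset.mem_product, Nat.mem_divisors] at hp
    have hxy : Nat.Coprime x y := (hab.coprime_dvd_left hp.1.1).coprime_dvd_right hp.2.1
    have h1 : (x * y).gcd a = x := by
      rw [Nat.gcd_comm, Nat.Coprime.gcd_mul a hxy, Nat.gcd_eq_right hp.1.1,
        Nat.Coprime.gcd_eq_one (hab.symm.coprime_dvd_left hp.2.1).symm, mul_one]
    have h2 : (x * y).gcd b = y := by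
      rw [Nat.gcd_comm, Nat.Coprime.gcd_mul b hxy, Nat.gcd_eq_right hp.2.1,
        Nat.Coprime.gcd_eq_one (hab.coprime_dvd_left hp.1.1).symm, one_mul]
    simp [h1, h2]
  · intro d hd
    rw [Nat.mem_divisors] at hd
    rw [← Nat.Coprime.gcd_mul d hab, Nat.gcd_eq_left hd.1]

lemma unitaryChar_mul {r1 r2 d1 d2 : ℕ} (hr : Nat.Coprime r1 r2)
    (hd1 : d1 ∣ r1) (hd2 : d2 ∣ r2) :
    unitaryChar (r1 * r2) (d1 * d2) = unitaryChar r1 d1 * unitaryChar r2 d2 := by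
  have hdvd : d1 * d2 ∣ r1 * r2 := mul_dvd_mul hd1 hd2
  have hq : r1 * r2 / (d1 * d2) = r1 / d1 * (r2 / d2) := (Nat.div_mul_div_comm hd1 hd2).symm
  have hq1 : r1 / d1 ∣ r1 := Nat.div_dvd_of_dvd hd1
  have hq2 : r2 / d2 ∣ r2 := Nat.div_dvd_of_dvd hd2
  have c12 : Nat.Coprime d1 (r2 / d2) := (hr.coprime_dvd_left hd1).coprime_dvd_right hq2
  have c21 : Nat.Coprime d2 (r1 / d1) := (hr.symm.coprime_dvd_left hd2).coprime_dvd_right hq1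
  have big : Nat.Coprime (d1 * d2) (r1 / d1 * (r2 / d2)) ↔
      Nat.Coprime d1 (r1 / d1) ∧ Nat.Coprime d2 (r2 / d2) := by
    constructor
    · intro h
      exact ⟨(h.coprime_dvd_left (dvd_mul_right _ _)).coprime_dvd_right (dvd_mul_right _ _),
        (h.coprime_dvd_left (dvd_mul_left _ _)).coprime_dvd_right (dvd_mul_left _ _)⟩
    · rintro ⟨h1, h2⟩
      exact Nat.Coprime.mul (h1.mul_right c12) (c21.mul_right h2)
  unfold unitaryChar
  rw [hq]
  simp only [hdvd, hd1, hd2, true_and, big]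
  split_ifs <;> simp_all

open ArithmeticFunction in
lemma mubar_mul {r1 r2 e1 e2 : ℕ} (hr : Nat.Coprime r1 r2)
    (he1 : e1 ∣ r1) (he2 : e2 ∣ r2) :
    mubar (r1 * r2) (e1 * e2) = mubar r1 e1 * mubar r2 e2 := by
  have hce : Nat.Coprime e1 e2 := (hr.coprime_dvd_left he1).coprime_dvd_right he2
  unfold mubar
  rw [sum_divisors_coprime_mul _ hce, Finset.sum_mul_sum]
  refine Finset.sum_congr rfl fun x hx => Finset.sum_congr rfl fun y hy => ?_
  rw [Nat.mem_divisors] at hx hy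
  have hx1 : x ∣ r1 := hx.1.trans he1
  have hy2 : y ∣ r2 := hy.1.trans he2
  have hq : e1 * e2 / (x * y) = e1 / x * (e2 / y) := (Nat.div_mul_div_comm hx.1 hy.1).symm
  have hcq : Nat.Coprime (e1 / x) (e2 / y) :=
    ((hr.coprime_dvd_left ((Nat.div_dvd_of_dvd hx.1).trans he1)).coprime_dvd_right
      ((Nat.div_dvd_of_dvd hy.1).trans he2))
  rw [unitaryChar_mul hr hx1 hy2, hq, isMultiplicative_moebius.map_mul_of_coprime hcq]
  push_cast
  ring

lemma sfun_mul {r1 r2 g1 g2 : ℕ} (hr : Nat.Coprime r1 r2)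
    (hg1 : g1 ∣ r1) (hg2 : g2 ∣ r2) :
    sfun (r1 * r2) (g1 * g2) = sfun r1 g1 * sfun r2 g2 := by
  have hcg : Nat.Coprime g1 g2 := (hr.coprime_dvd_left hg1).coprime_dvd_right hg2
  unfold sfun
  rw [sum_divisors_coprime_mul _ hcg, Finset.sum_mul_sum]
  refine Finset.sum_congr rfl fun x hx => Finset.sum_congr rfl fun y hy => ?_
  rw [Nat.mem_divisors] at hx hy
  have hx1 : x ∣ r1 := hx.1.trans hg1
  have hy2 : y ∣ r2 := hy.1.trans hg2
  have hq : r1 * r2 / (x * y) = r1 / x * (r2 / y) := (Nat.div_mul_div_comm hx1 hy2).symm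
  rw [hq, mubar_mul hr (Nat.div_dvd_of_dvd hx1) (Nat.div_dvd_of_dvd hy2)]
  push_cast
  ring

open ArithmeticFunction in
lemma mubar_self_prime_pow {p k : ℕ} (hp : p.Prime) (hk : k ≠ 0) :
    mubar (p ^ k) (p ^ k) = if k = 1 then 0 else 1 := by
  unfold mubar
  rw [Nat.sum_divisors_prime_pow hp]
  have key : ∀ i ∈ Finset.range (k + 1),
      unitaryChar (p ^ k) (p ^ i) * ((moebius (p ^ k / p ^ i) : ℤ) : ℂ) =
        (if i = 0 then ((moebius (p ^ k) : ℤ) : ℂ) else 0) + (if i = k then 1 else 0) := by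
    intro i hi
    rw [Finset.mem_range] at hi
    have hik : i ≤ k := Nat.lt_succ_iff.mp hi
    have hdiv : p ^ k / p ^ i = p ^ (k - i) := Nat.pow_div hik hp.pos
    have huc : unitaryChar (p ^ k) (p ^ i) = if i = 0 ∨ i = k then 1 else 0 := by
      unfold unitaryChar
      have hdvd : p ^ i ∣ p ^ k := pow_dvd_pow p hik
      have : Nat.Coprime (p ^ i) (p ^ k / p ^ i) ↔ (i = 0 ∨ i = k) := by
        rw [hdiv]
        constructor
        · intro hco
          by_contra hcon
          push_neg at hcon
          have h1 : p ∣ p ^ i := dvd_pow_self p hcon.1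
          have h2 : p ∣ p ^ (k - i) := dvd_pow_self p (by omega)
          have := Nat.eq_one_of_dvd_coprimes hco h1 h2
          exact hp.one_lt.ne' this
        · rintro (rfl | rfl) <;> simp [Nat.coprime_one_left, Nat.coprime_one_right]
      simp [hdvd, this]
    rw [huc, hdiv]
    rcases eq_or_ne i 0 with rfl | hi0
    · have : ¬ (0 = k) := fun h => hk h.symm
      simp [this]
    · rcases eq_or_ne i k with rfl | hik'
      · simp [hi0, Nat.sub_self]
      · have : ¬ (i = 0 ∨ i = k) := by tauto
        simp [this, hi0, hik']
  rw [Finset.sum_congr rfl key, Finset.sum_add_distrib, Finset.sum_ite_eq' _ 0,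
    Finset.sum_ite_eq' _ k]
  have h0 : (0 : ℕ) ∈ Finset.range (k + 1) := by simp
  have hkk : k ∈ Finset.range (k + 1) := by simp
  rw [if_pos h0, if_pos hkk, moebius_apply_prime_pow hp hk]
  rcases eq_or_ne k 1 with rfl | hk1
  · norm_num
  · rw [if_neg hk1, if_neg hk1]
    norm_num

lemma sfun_one (r : ℕ) : sfun r 1 = mubar r r := by
  simp [sfun, Nat.divisors_one]

lemma mub_prime_pow {p k : ℕ} (hp : p.Prime) (hk : k ≠ 0) :
    mub (p ^ k) = if k = 1 then 0 else 1 := by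
  unfold mub
  rw [Nat.primeFactors_prime_pow hk hp]
  simp only [Finset.mem_singleton, forall_eq]
  have h2k : p ^ 2 ∣ p ^ k ↔ 2 ≤ k := Nat.pow_dvd_pow_iff_le_right hp.one_lt
  simp only [h2k]
  rcases eq_or_ne k 1 with rfl | h
  · norm_num
  · have : 2 ≤ k := by omega
    simp [h, this]

lemma mub_mul {r1 r2 : ℕ} (hr : Nat.Coprime r1 r2) (h1 : r1 ≠ 0) (h2 : r2 ≠ 0) :
    mub (r1 * r2) = mub r1 * mub r2 := by
  unfold mub
  have key : (∀ p ∈ (r1 * r2).primeFactors, p ^ 2 ∣ r1 * r2) ↔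
      (∀ p ∈ r1.primeFactors, p ^ 2 ∣ r1) ∧ (∀ p ∈ r2.primeFactors, p ^ 2 ∣ r2) := by
    rw [Nat.primeFactors_mul h1 h2]
    constructor
    · intro h
      constructor
      · intro p hp
        have hpd : (p : ℕ) ∣ r1 := Nat.dvd_of_mem_primeFactors hp
        have hco : Nat.Coprime (p ^ 2) r2 := ((hr.coprime_dvd_left hpd)).pow_left _
        exact hco.dvd_of_dvd_mul_right (h p (Finset.mem_union_left _ hp))
      · intro p hp
        have hpd : (p : ℕ) ∣ r2 := Nat.dvd_of_mem_primeFactors hp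
        have hco : Nat.Coprime (p ^ 2) r1 := ((hr.symm.coprime_dvd_left hpd)).pow_left _
        exact hco.dvd_of_dvd_mul_left (h p (Finset.mem_union_right _ hp))
    · rintro ⟨ha, hb⟩ p hp
      rcases Finset.mem_union.1 hp with hp | hp
      · exact (ha p hp).trans (dvd_mul_right _ _)
      · exact (hb p hp).trans (dvd_mul_left _ _)
  simp only [key]
  split_ifs <;> simp_all

lemma key_lemma : ∀ r : ℕ, r ≠ 0 → ∀ a b : ℕ, a ∣ r → b ∣ r → Nat.Coprime a b →
    sfun r a * sfun r b = mub r * sfun r (a * b) := by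
  intro r
  induction r using Nat.recOnPosPrimePosCoprime with
  | prime_pow p k hp hk =>
    intro _ a b ha hb hab
    obtain ⟨i, hik, rfl⟩ := (Nat.dvd_prime_pow hp).1 ha
    obtain ⟨j, hjk, rfl⟩ := (Nat.dvd_prime_pow hp).1 hb
    have hij : i = 0 ∨ j = 0 := by
      by_contra hcon
      push_neg at hcon
      have h1 : p ∣ p ^ i := dvd_pow_self p hcon.1
      have h2 : p ∣ p ^ j := dvd_pow_self p hcon.2
      exact hp.one_lt.ne' (Nat.eq_one_of_dvd_coprimes hab h1 h2)
    have hmub : mub (p ^ k) = mubar (p ^ k) (p ^ k) := by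
      rw [mub_prime_pow hp hk.ne', mubar_self_prime_pow hp hk.ne']
    rcases hij with rfl | rfl
    · rw [pow_zero, one_mul, sfun_one, ← hmub]
    · rw [pow_zero, mul_one, sfun_one, ← hmub, mul_comm]
  | zero => intro h; exact absurd rfl h
  | one =>
    intro _ a b ha hb _
    rw [Nat.dvd_one] at ha hb
    subst ha; subst hb
    have h1 : sfun 1 1 = 1 := by
      simp [sfun, mubar, Nat.divisors_one, unitaryChar]
    have h2 : mub 1 = 1 := by simp [mub]
    simp [h1, h2]
  | coprime r1 r2 h1lt h2lt hcop IH1 IH2 =>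
    intro _ a b ha hb hab
    have h1 : r1 ≠ 0 := by omega
    have h2 : r2 ≠ 0 := by omega
    set a1 := a.gcd r1 with ha1def
    set a2 := a.gcd r2 with ha2def
    set b1 := b.gcd r1 with hb1def
    set b2 := b.gcd r2 with hb2def
    have haa : a1 * a2 = a := by
      rw [ha1def, ha2def, ← Nat.Coprime.gcd_mul a hcop, Nat.gcd_eq_left ha]
    have hbb : b1 * b2 = b := by
      rw [hb1def, hb2def, ← Nat.Coprime.gcd_mul b hcop, Nat.gcd_eq_left hb]
    have ha1r : a1 ∣ r1 := Nat.gcd_dvd_right _ _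
    have ha2r : a2 ∣ r2 := Nat.gcd_dvd_right _ _
    have hb1r : b1 ∣ r1 := Nat.gcd_dvd_right _ _
    have hb2r : b2 ∣ r2 := Nat.gcd_dvd_right _ _
    have hab1 : Nat.Coprime a1 b1 :=
      (hab.coprime_dvd_left (Nat.gcd_dvd_left _ _)).coprime_dvd_right (Nat.gcd_dvd_left _ _)
    have hab2 : Nat.Coprime a2 b2 :=
      (hab.coprime_dvd_left (Nat.gcd_dvd_left _ _)).coprime_dvd_right (Nat.gcd_dvd_left _ _)
    have hA : sfun (r1 * r2) a = sfun r1 a1 * sfun r2 a2 := by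
      rw [← haa]; exact sfun_mul hcop ha1r ha2r
    have hB : sfun (r1 * r2) b = sfun r1 b1 * sfun r2 b2 := by
      rw [← hbb]; exact sfun_mul hcop hb1r hb2r
    have hab1r : a1 * b1 ∣ r1 := hab1.mul_dvd_of_dvd_of_dvd ha1r hb1r
    have hab2r : a2 * b2 ∣ r2 := hab2.mul_dvd_of_dvd_of_dvd ha2r hb2r
    have hC : sfun (r1 * r2) (a * b) = sfun r1 (a1 * b1) * sfun r2 (a2 * b2) := by
      rw [show a * b = (a1 * b1) * (a2 * b2) by rw [← haa, ← hbb]; ring]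
      exact sfun_mul hcop hab1r hab2r
    rw [hA, hB, hC, mub_mul hcop h1 h2]
    have e1 := IH1 h1 a1 b1 ha1r hb1r hab1
    have e2 := IH2 h2 a2 b2 ha2r hb2r hab2
    calc sfun r1 a1 * sfun r2 a2 * (sfun r1 b1 * sfun r2 b2)
        = (sfun r1 a1 * sfun r1 b1) * (sfun r2 a2 * sfun r2 b2) := by ring
      _ = (mub r1 * sfun r1 (a1 * b1)) * (mub r2 * sfun r2 (a2 * b2)) := by rw [e1, e2]
      _ = mub r1 * mub r2 * (sfun r1 (a1 * b1) * sfun r2 (a2 * b2)) := by ring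

theorem ramanujanBar_quasimult (r m n : ℕ) (hr : 0 < r) (hm : 0 < m) (hn : 0 < n)
    (h : Nat.Coprime m n) :
    ramanujanBar r m * ramanujanBar r n =
      (if r = 1 ∨ ∀ p ∈ r.primeFactors, p ^ 2 ∣ r then (1 : ℂ) else 0) *
        ramanujanBar r (m * n) := by
  have hif : (if r = 1 ∨ ∀ p ∈ r.primeFactors, p ^ 2 ∣ r then (1 : ℂ) else 0) = mub r := by
    unfold mub
    congr 1
    simp only [eq_iff_iff]
    constructor
    · rintro (rfl | h') <;> simp_all
    · intro h'; exact Or.inr h'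
  have hram : ∀ k : ℕ, ramanujanBar r k = sfun r (k.gcd r) := fun k => rfl
  have hgcd : (m * n).gcd r = m.gcd r * n.gcd r := by
    rw [Nat.gcd_comm, Nat.Coprime.gcd_mul r h, Nat.gcd_comm r m, Nat.gcd_comm r n]
  have hcg : Nat.Coprime (m.gcd r) (n.gcd r) :=
    (h.coprime_dvd_left (Nat.gcd_dvd_left _ _)).coprime_dvd_right (Nat.gcd_dvd_left _ _)
  rw [hif, hram, hram, hram, hgcd]
  exact key_lemma r hr.ne' _ _ (Nat.gcd_dvd_right _ _) (Nat.gcd_dvd_right _ _) hcg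
end
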